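/- Let L be a solvable Lie algebra and U a subalgebra. Every minimal element of Ω(U,L) is a U-prefrattini subalgebra of L. -/

import Mathlib

open LieAlgebra

namespace Paper

variable {F : Type*} [Field F] {L : Type*} [LieRing L] [LieAlgebra F L]

/-- The interval `[U:L]` is complemented: every subalgebra containing `U`
has a complement over `U`. -/
def IsComplementedInterval (U : LieSubalgebra F L) : Prop :=
  ∀ S : LieSubalgebra F L, U ≤ S →
    ∃ T : LieSubalgebra F L, U ≤ T ∧ S ⊓ T = U ∧ S ⊔ T = ⊤

/-- `Ω(U,L)`. -/
def Omega (U : LieSubalgebra F L) : Set (LieSubalgebra F L) :=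
  {S | U ≤ S ∧ IsComplementedInterval S}

/-- `Ω(U,L)_min`, the inclusion-minimal elements. -/
def OmegaMin (U : LieSubalgebra F L) : Set (LieSubalgebra F L) :=
  {S | S ∈ Omega U ∧ ∀ T ∈ Omega U, T ≤ S → T = S}

/-- `φ(U,L)`, the intersection of all maximal subalgebras containing `U`. -/
def phi (U : LieSubalgebra F L) : LieSubalgebra F L :=
  sInf {M : LieSubalgebra F L | IsCoatom M ∧ U ≤ M}

/-- A subalgebra which is an ideal of `L`. -/
def IsIdealSubalg (A : LieSubalgebra F L) : Prop :=
  ∀ x : L, ∀ a ∈ A, ⁅x, a⁆ ∈ A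

/-- A minimal ideal of `L`. -/
def IsMinimalIdeal (A : LieSubalgebra F L) : Prop :=
  A ≠ ⊥ ∧ IsIdealSubalg A ∧
    ∀ B : LieSubalgebra F L, IsIdealSubalg B → B ≤ A → B = ⊥ ∨ B = A

/-- A chief series `0 = A 0 < A 1 < … < A n = L`. -/
def IsChiefSeries (A : ℕ → LieSubalgebra F L) (n : ℕ) : Prop :=
  A 0 = ⊥ ∧ A n = ⊤ ∧ (∀ i, IsIdealSubalg (A i)) ∧
    ∀ i < n, A i < A (i + 1) ∧
      ∀ B : LieSubalgebra F L, IsIdealSubalg B → A i ≤ B → B ≤ A (i + 1) →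
        B = A i ∨ B = A (i + 1)

/-- The chief factor `A/B` is `U`-Frattini. -/
def IsUFrattiniFactor (U B A : LieSubalgebra F L) : Prop :=
  A ≤ phi (U ⊔ B) ∨ U ⊔ B = ⊤

/-- `B` is a `U`-prefrattini subalgebra with respect to the series `A`. -/
def IsPrefrattiniWrt (U : LieSubalgebra F L) (A : ℕ → LieSubalgebra F L) (n : ℕ)
    (B : LieSubalgebra F L) : Prop :=
  ∃ M : ℕ → LieSubalgebra F L,
    (∀ i < n, ¬ IsUFrattiniFactor U (A i) (A (i + 1)) →
      IsCoatom (M i) ∧ U ⊔ A i ≤ M i ∧ ¬ A (i + 1) ≤ M i) ∧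
    B = ⨅ i ∈ {i | i < n ∧ ¬ IsUFrattiniFactor U (A i) (A (i + 1))}, M i

/-- `B` is a `U`-prefrattini subalgebra of `L` (with respect to some chief series). -/
def IsPrefrattini (U B : LieSubalgebra F L) : Prop :=
  ∃ (n : ℕ) (A : ℕ → LieSubalgebra F L), IsChiefSeries A n ∧ IsPrefrattiniWrt U A n B

/-- The lower central series of an ideal `I` of `L` (computed inside `L`):
`idealLCS I k = I^{k+1}`. -/
def idealLCS (I : LieIdeal F L) : ℕ → LieIdeal F L
  | 0 => I
  | k + 1 => ⁅I, idealLCS I k⁆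

/-- The nilpotent residual `L^∞`. -/
def nilpotentResidual (F : Type*) (L : Type*) [Field F] [LieRing L] [LieAlgebra F L] :
    LieIdeal F L :=
  ⨅ k, LieModule.lowerCentralSeries F L L k

/-- The exponential `exp (ad x)` truncated below `p` (all higher terms vanish when
`ad x` has nilpotency index at most `p`). -/
noncomputable def expAd (F : Type*) {L : Type*} [Field F] [LieRing L] [LieAlgebra F L]
    (p : ℕ) (x : L) : L →ₗ[F] L :=
  ∑ r ∈ Finset.range p, (r.factorial : F)⁻¹ • ((LieAlgebra.ad F L x : Module.End F L) ^ r : Module.End F L)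

/-- The quotient map `L → L ⧸ I` as a morphism of Lie algebras. -/
def quotLieHom (I : LieIdeal F L) : L →ₗ⁅F⁆ L ⧸ I :=
  { I.toSubmodule.mkQ with map_lie' := rfl }

end Paper
namespace Paper

universe v

variable {F : Type*} [Field F] {L : Type*} [LieRing L] [LieAlgebra F L]

/-- sup with an ideal is the submodule sum -/
theorem supIdeal {X I : LieSubalgebra F L} (hI : IsIdealSubalg I) :
    ((X ⊔ I : LieSubalgebra F L) : Submodule F L) = (X : Submodule F L) ⊔ (I : Submodule F L) := by
  have hK : ∀ {a b : L}, a ∈ (X : Submodule F L) ⊔ (I : Submodule F L) →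
      b ∈ (X : Submodule F L) ⊔ (I : Submodule F L) →
      ⁅a, b⁆ ∈ (X : Submodule F L) ⊔ (I : Submodule F L) := by
    intro a b ha hb
    obtain ⟨x, hx, i, hi, rfl⟩ := Submodule.mem_sup.1 ha
    obtain ⟨y, hy, j, hj, rfl⟩ := Submodule.mem_sup.1 hb
    have h1 : ⁅x, y⁆ ∈ X := X.lie_mem hx hy
    have h2 : ⁅x, j⁆ ∈ I := hI x j hj
    have h3 : ⁅i, y⁆ ∈ I := by
      have h := I.neg_mem (hI y i hi)
      rwa [← lie_skew y i, neg_neg] at h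
    have h4 : ⁅i, j⁆ ∈ I := hI i j hj
    have : ⁅x + i, y + j⁆ = ⁅x, y⁆ + (⁅x, j⁆ + ⁅i, y⁆ + ⁅i, j⁆) := by
      simp [lie_add, add_lie]; abel
    rw [this]
    exact Submodule.add_mem _ (Submodule.mem_sup_left h1)
      (Submodule.mem_sup_right (I.add_mem (I.add_mem h2 h3) h4))
  let K : LieSubalgebra F L := { (X : Submodule F L) ⊔ (I : Submodule F L) with lie_mem' := hK }
  have hXK : X ≤ K := fun x hx => Submodule.mem_sup_left hx
  have hIK : I ≤ K := fun x hx => Submodule.mem_sup_right hx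
  have h1 : (X ⊔ I : LieSubalgebra F L) ≤ K := sup_le hXK hIK
  have h2 : ((X ⊔ I : LieSubalgebra F L) : Submodule F L) ≤
      (X : Submodule F L) ⊔ (I : Submodule F L) := h1
  refine le_antisymm h2 (sup_le ?_ ?_)
  · exact (le_sup_left : X ≤ X ⊔ I)
  · exact (le_sup_right : I ≤ X ⊔ I)

theorem coatom_exists [FiniteDimensional F L] {X : LieSubalgebra F L} (h : X ≠ ⊤) :
    ∃ M : LieSubalgebra F L, IsCoatom M ∧ X ≤ M := by
  have key : ∀ (k : ℕ) (X : LieSubalgebra F L), X ≠ ⊤ →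
      Module.finrank F L - Module.finrank F (X : Submodule F L) ≤ k →
      ∃ M : LieSubalgebra F L, IsCoatom M ∧ X ≤ M := by
    intro k
    induction k with
    | zero =>
      intro X hX hk
      exfalso
      have hlt : (X : Submodule F L) < ⊤ := by
        refine lt_of_le_of_ne le_top ?_
        intro hc
        exact hX (LieSubalgebra.toSubmodule_injective
          (by rw [hc, LieSubalgebra.top_toSubmodule]))
      have := Submodule.finrank_lt (K := F) (V := L) hlt.ne
      omega
    | succ k ih =>
      intro X hX hk
      by_cases hco : IsCoatom X
      · exact ⟨X, hco, le_rfl⟩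
      · have : ∃ Y : LieSubalgebra F L, X < Y ∧ Y ≠ ⊤ := by
          by_contra hc
          push_neg at hc
          exact hco ⟨hX, fun Y hY => hc Y hY⟩
        obtain ⟨Y, hXY, hY⟩ := this
        have hfr : Module.finrank F (X : Submodule F L) < Module.finrank F (Y : Submodule F L) :=
          Submodule.finrank_lt_finrank_of_lt (by exact_mod_cast hXY)
        obtain ⟨M, hM, hYM⟩ := ih Y hY (by omega)
        exact ⟨M, hM, le_of_lt (lt_of_lt_of_le hXY hYM)⟩
  exact key (Module.finrank F L) X h (by omega)

/-- Frattini-type argument: if `[S:L]` is complemented and every coatom over `S`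
contains `C`, then `C ≤ S`. -/
theorem le_of_all_coatoms [FiniteDimensional F L] {S C : LieSubalgebra F L}
    (hS : IsComplementedInterval S)
    (h : ∀ M : LieSubalgebra F L, IsCoatom M → S ≤ M → C ≤ M) : C ≤ S := by
  obtain ⟨Y, hSY, hmeet, hjoin⟩ := hS (S ⊔ C) le_sup_left
  by_cases hY : Y = ⊤
  · subst hY
    rw [inf_top_eq] at hmeet
    rw [← hmeet]; exact le_sup_right
  · obtain ⟨M, hM, hYM⟩ := coatom_exists hY
    exfalso
    have hSM : S ≤ M := hSY.trans hYM
    have hCM : C ≤ M := h M hM hSM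
    have : S ⊔ C ⊔ Y ≤ M := sup_le (sup_le hSM hCM) hYM
    rw [hjoin] at this
    exact hM.1 (top_le_iff.1 this)

/-- Convert an ideal-subalgebra to a `LieIdeal`. -/
def toIdeal (A : LieSubalgebra F L) (hA : IsIdealSubalg A) : LieIdeal F L :=
  { A.toSubmodule with lie_mem := fun {x m} hm => hA x m hm }

theorem mem_toIdeal {A : LieSubalgebra F L} {hA : IsIdealSubalg A} {x : L} :
    x ∈ toIdeal A hA ↔ x ∈ A := Iff.rfl

/-- A minimal "bottom" chief factor of a solvable Lie algebra is abelian. -/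
theorem abelian_min [LieAlgebra.IsSolvable L] {A1 : LieSubalgebra F L}
    (hI : IsIdealSubalg A1)
    (hchief : ∀ B : LieSubalgebra F L, IsIdealSubalg B → B ≤ A1 → B = ⊥ ∨ B = A1) :
    ∀ x ∈ A1, ∀ y ∈ A1, ⁅x, y⁆ = (0 : L) := by
  set I1 : LieIdeal F L := toIdeal A1 hI with hI1
  set J : LieIdeal F L := ⁅I1, I1⁆ with hJ
  have hJA : (J : LieSubalgebra F L) ≤ A1 := by
    intro x hx
    have : J ≤ I1 := LieSubmodule.lie_le_right I1 I1
    exact this hx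
  have hJideal : IsIdealSubalg (J : LieSubalgebra F L) := fun x a ha => J.lie_mem ha
  rcases hchief _ hJideal hJA with h | h
  · intro x hx y hy
    have h2 : ⁅x, y⁆ ∈ (J : LieSubalgebra F L) := LieSubmodule.lie_mem_lie hx hy
    rw [h] at h2
    simpa using h2
  · intro x hx y hy
    have hJI : J = I1 := by
      ext z
      constructor
      · intro hz; exact hJA hz
      · intro hz
        have : z ∈ (J : LieSubalgebra F L) := h ▸ hz
        exact this
    have hle : ∀ k, I1 ≤ LieAlgebra.derivedSeries F L k := by
      intro k
      induction k with
      | zero => exact le_top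
      | succ k ih =>
        rw [LieAlgebra.derivedSeries_def, LieAlgebra.derivedSeriesOfIdeal_succ]
        calc I1 = ⁅I1, I1⁆ := hJI.symm
        _ ≤ _ := LieSubmodule.mono_lie ih ih
    obtain ⟨k, hk⟩ := LieAlgebra.IsSolvable.solvable F L
    have hbot : I1 ≤ ⊥ := hk ▸ hle k
    have : x ∈ (⊥ : LieIdeal F L) := hbot hx
    have hx0 : x = 0 := by simpa using this
    simp [hx0]

theorem mem_iInf' {ι : Sort*} (f : ι → LieSubalgebra F L) (x : L) :
    (x ∈ ⨅ i, f i) ↔ ∀ i, x ∈ f i := by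
  rw [iInf]
  have h := LieSubalgebra.coe_sInf (Set.range f)
  constructor
  · intro hx i
    have : x ∈ (↑(sInf (Set.range f)) : Set L) := hx
    rw [h] at this
    simp only [Set.mem_iInter] at this
    exact this (f i) ⟨i, rfl⟩
  · intro hx
    show x ∈ (↑(sInf (Set.range f)) : Set L)
    rw [h]
    simp only [Set.mem_iInter]
    rintro s ⟨i, rfl⟩
    exact hx i

theorem chief_mono {A : ℕ → LieSubalgebra F L} {n : ℕ} (hA : IsChiefSeries A n)
    {i j : ℕ} (hij : i ≤ j) (hj : j ≤ n) : A i ≤ A j := by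
  obtain ⟨k, rfl⟩ := Nat.exists_eq_add_of_le hij
  clear hij
  induction k with
  | zero => exact le_rfl
  | succ k ih =>
    have h1 : i + k < n := by omega
    have h2 := (hA.2.2.2 (i + k) h1).1
    have := ih (by omega)
    calc A i ≤ A (i + k) := this
    _ ≤ A (i + k + 1) := le_of_lt h2
    _ = A (i + (k+1)) := by ring_nf

/-- If `X ⊔ A1 = ⊤` with `A1` an abelian minimal ideal, then `X ⊓ A1 = ⊥` or `A1 ≤ X`. -/
theorem min_meet {A1 X : LieSubalgebra F L} (hId : IsIdealSubalg A1)
    (hab : ∀ x ∈ A1, ∀ y ∈ A1, ⁅x, y⁆ = (0 : L))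
    (hchief : ∀ B : LieSubalgebra F L, IsIdealSubalg B → B ≤ A1 → B = ⊥ ∨ B = A1)
    (hXA : X ⊔ A1 = ⊤) : X ⊓ A1 = ⊥ ∨ A1 ≤ X := by
  have hsum : ∀ z : L, z ∈ (X : Submodule F L) ⊔ (A1 : Submodule F L) := by
    intro z
    have : z ∈ ((X ⊔ A1 : LieSubalgebra F L) : Submodule F L) := by
      rw [hXA]; trivial
    rwa [supIdeal hId] at this
  have hideal : IsIdealSubalg (X ⊓ A1) := by
    intro z d hd
    obtain ⟨x, hx, a, ha, rfl⟩ := Submodule.mem_sup.1 (hsum z)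
    have hd1 : d ∈ X := hd.1
    have hd2 : d ∈ A1 := hd.2
    have h1 : ⁅x, d⁆ ∈ X := X.lie_mem hx hd1
    have h2 : ⁅x, d⁆ ∈ A1 := hId x d hd2
    have h3 : ⁅a, d⁆ = 0 := hab a ha d hd2
    have : ⁅x + a, d⁆ = ⁅x, d⁆ := by rw [add_lie, h3, add_zero]
    rw [this]
    exact ⟨h1, h2⟩
  rcases hchief _ hideal inf_le_right with h | h
  · exact Or.inl h
  · exact Or.inr (h ▸ (inf_le_left : X ⊓ A1 ≤ X))

end Paper
namespace Paper

variable {F : Type*} [Field F] {L : Type*} [LieRing L] [LieAlgebra F L]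

section QuotientCorrespondence

variable (I : LieIdeal F L)

theorem qsurj : Function.Surjective (quotLieHom I) := Submodule.mkQ_surjective _

theorem qker (x : L) : quotLieHom I x = 0 ↔ x ∈ I := Submodule.Quotient.mk_eq_zero _

theorem qsub_ker {x y : L} (h : quotLieHom I x = quotLieHom I y) : x - y ∈ I := by
  have h2 : quotLieHom I (x - y) = 0 := by
    have : quotLieHom I (x - y) = quotLieHom I x - quotLieHom I y := by simp
    rw [this, h, sub_self]
  exact (qker I _).1 h2

theorem qmap_comap (X : LieSubalgebra F (L ⧸ I)) : (X.comap (quotLieHom I)).map (quotLieHom I) = X := by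
  ext y
  rw [LieSubalgebra.mem_map]
  constructor
  · rintro ⟨x, hx, rfl⟩; exact hx
  · intro hy
    obtain ⟨x, rfl⟩ := qsurj I y
    exact ⟨x, hy, rfl⟩

theorem qker_le_comap (X : LieSubalgebra F (L ⧸ I)) {x : L} (hx : x ∈ I) :
    x ∈ X.comap (quotLieHom I) := by
  have h : quotLieHom I x = 0 := (qker I x).2 hx
  show quotLieHom I x ∈ X
  rw [h]; exact X.zero_mem

theorem qcomap_map (X : LieSubalgebra F L) (hX : ∀ x ∈ I, x ∈ X) :
    (X.map (quotLieHom I)).comap (quotLieHom I) = X := by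
  refine le_antisymm ?_ ((LieSubalgebra.gc_map_comap (f := quotLieHom I)).le_u_l X)
  intro x hx
  obtain ⟨y, hy, hxy⟩ := (LieSubalgebra.mem_map _ _ _).1 hx
  have h1 : x - y ∈ I := qsub_ker I hxy.symm
  have h2 : x - y ∈ X := hX _ h1
  have h3 : x = y + (x - y) := by abel
  rw [h3]; exact X.add_mem hy h2

theorem qcomap_top : (⊤ : LieSubalgebra F (L ⧸ I)).comap (quotLieHom I) = ⊤ := by
  ext x; constructor
  · intro _; trivial
  · intro _; trivial

theorem qmap_top : (⊤ : LieSubalgebra F L).map (quotLieHom I) = ⊤ := by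
  rw [← qcomap_top I, qmap_comap I]

theorem qmap_sup (X Y : LieSubalgebra F L) :
    (X ⊔ Y).map (quotLieHom I) = X.map (quotLieHom I) ⊔ Y.map (quotLieHom I) :=
  (LieSubalgebra.gc_map_comap (f := quotLieHom I)).l_sup

theorem qcomap_coatom {X : LieSubalgebra F (L ⧸ I)} (hX : IsCoatom X) :
    IsCoatom (X.comap (quotLieHom I)) := by
  constructor
  · intro hc
    apply hX.1
    rw [← qmap_comap I X, hc, qmap_top]
  · intro Z hZ
    have h1 : X ≤ Z.map (quotLieHom I) := by
      conv_lhs => rw [← qmap_comap I X]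
      exact (LieSubalgebra.gc_map_comap (f := quotLieHom I)).monotone_l hZ.le
    have hne : X ≠ Z.map (quotLieHom I) := by
      intro hc
      have : Z ≤ X.comap (quotLieHom I) := by
        rw [hc]; exact (LieSubalgebra.gc_map_comap (f := quotLieHom I)).le_u_l Z
      exact absurd (le_antisymm this hZ.le) (ne_of_gt hZ)
    have h2 := hX.2 _ (lt_of_le_of_ne h1 hne)
    have hZk : ∀ x ∈ I, x ∈ Z := fun x hx => hZ.le (qker_le_comap I X hx)
    rw [← qcomap_map I Z hZk, h2, qcomap_top]

theorem qmap_coatom {M : LieSubalgebra F L} (hM : IsCoatom M) (hk : ∀ x ∈ I, x ∈ M) :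
    IsCoatom (M.map (quotLieHom I)) := by
  constructor
  · intro hc
    apply hM.1
    rw [← qcomap_map I M hk, hc, qcomap_top]
  · intro Z hZ
    have h1 : M ≤ Z.comap (quotLieHom I) := by
      conv_lhs => rw [← qcomap_map I M hk]
      exact (LieSubalgebra.gc_map_comap (f := quotLieHom I)).monotone_u hZ.le
    have hne : M ≠ Z.comap (quotLieHom I) := by
      intro hc
      apply absurd (qmap_comap I Z)
      rw [← hc]
      intro h2
      exact (ne_of_gt hZ) h2.symm
    have h2 := hM.2 _ (lt_of_le_of_ne h1 hne)
    rw [← qmap_comap I Z, h2, qmap_top]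

theorem qmap_ideal {X : LieSubalgebra F L} (hX : IsIdealSubalg X) :
    IsIdealSubalg (X.map (quotLieHom I)) := by
  intro z b hb
  obtain ⟨a, ha, rfl⟩ := (LieSubalgebra.mem_map _ _ _).1 hb
  obtain ⟨y, rfl⟩ := qsurj I z
  have : ⁅quotLieHom I y, quotLieHom I a⁆ = quotLieHom I ⁅y, a⁆ := ((quotLieHom I).map_lie y a).symm
  rw [this]
  exact (LieSubalgebra.mem_map _ _ _).2 ⟨⁅y, a⁆, hX y a ha, rfl⟩

theorem qcomap_ideal {X : LieSubalgebra F (L ⧸ I)} (hX : IsIdealSubalg X) :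
    IsIdealSubalg (X.comap (quotLieHom I)) := by
  intro x a ha
  show quotLieHom I ⁅x, a⁆ ∈ X
  rw [(quotLieHom I).map_lie x a]
  exact hX _ _ ha

end QuotientCorrespondence

end Paper
namespace Paper

variable {F : Type*} [Field F] {L : Type*} [LieRing L] [LieAlgebra F L]

section ChiefQuot

variable (I : LieIdeal F L) {m : ℕ} {A : ℕ → LieSubalgebra F L}

theorem qker_le_A (hI : ∀ x : L, x ∈ I ↔ x ∈ A 1) (hA : IsChiefSeries A (m+1))
    {j : ℕ} (hj : j + 1 ≤ m + 1) : ∀ x ∈ I, x ∈ A (j+1) := fun x hx =>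
  chief_mono hA (Nat.one_le_iff_ne_zero.2 (Nat.succ_ne_zero j)) hj ((hI x).1 hx)

theorem qchief (hI : ∀ x : L, x ∈ I ↔ x ∈ A 1) (hA : IsChiefSeries A (m+1)) :
    IsChiefSeries (fun j => (A (j+1)).map (quotLieHom I)) m := by
  obtain ⟨h0, hT, hId, hlt⟩ := hA
  have hA' : IsChiefSeries A (m+1) := ⟨h0, hT, hId, hlt⟩
  refine ⟨?_, ?_, ?_, ?_⟩
  · -- image of A 1 is ⊥
    refine le_antisymm ?_ bot_le
    intro y hy
    obtain ⟨a, ha, rfl⟩ := (LieSubalgebra.mem_map _ _ _).1 hy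
    have : quotLieHom I a = 0 := (qker I a).2 ((hI a).2 ha)
    rw [this]; exact (⊥ : LieSubalgebra F (L ⧸ I)).zero_mem
  · show (A (m+1)).map (quotLieHom I) = ⊤
    rw [hT, qmap_top]
  · intro j
    exact qmap_ideal I (hId (j+1))
  · intro j hj
    have hj1 : j + 1 < m + 1 := by omega
    have hlt1 := (hlt (j+1) hj1).1
    have hk1 : ∀ x ∈ I, x ∈ A (j+1) := qker_le_A I hI hA' (by omega)
    have hk2 : ∀ x ∈ I, x ∈ A (j+2) := qker_le_A I hI hA' (by omega)
    constructor
    · refine lt_of_le_of_ne ((LieSubalgebra.gc_map_comap (f := quotLieHom I)).monotone_l hlt1.le) ?_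
      intro hc
      have hc' : (A (j+1)).map (quotLieHom I) = (A (j+2)).map (quotLieHom I) := hc
      have : A (j+1) = A (j+2) := by
        rw [← qcomap_map I (A (j+1)) hk1, ← qcomap_map I (A (j+2)) hk2, hc']
      exact (ne_of_lt hlt1) this
    · intro Bb hBb h1' h2'
      have h1 : (A (j+1)).map (quotLieHom I) ≤ Bb := h1'
      have h2 : Bb ≤ (A (j+2)).map (quotLieHom I) := h2'
      set B := Bb.comap (quotLieHom I) with hB
      have hBid : IsIdealSubalg B := qcomap_ideal I hBb
      have hB1 : A (j+1) ≤ B := by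
        calc A (j+1) ≤ ((A (j+1)).map (quotLieHom I)).comap (quotLieHom I) :=
          (LieSubalgebra.gc_map_comap (f := quotLieHom I)).le_u_l _
        _ ≤ B := (LieSubalgebra.gc_map_comap (f := quotLieHom I)).monotone_u h1
      have hB2 : B ≤ A (j+2) := by
        calc B ≤ ((A (j+2)).map (quotLieHom I)).comap (quotLieHom I) :=
          (LieSubalgebra.gc_map_comap (f := quotLieHom I)).monotone_u h2
        _ = A (j+2) := qcomap_map I _ hk2
      rcases (hlt (j+1) hj1).2 B hBid hB1 hB2 with h | h
      · left
        show Bb = (A (j+1)).map (quotLieHom I)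
        rw [← qmap_comap I Bb, ← hB, h]
      · right
        show Bb = (A (j+2)).map (quotLieHom I)
        rw [← qmap_comap I Bb, ← hB, h]

theorem qfrat (hI : ∀ x : L, x ∈ I ↔ x ∈ A 1) (hA : IsChiefSeries A (m+1))
    (U : LieSubalgebra F L) {j : ℕ} (hj : j < m) :
    (IsUFrattiniFactor U (A (j+1)) (A (j+2)) ↔
      IsUFrattiniFactor (U.map (quotLieHom I))
        ((A (j+1)).map (quotLieHom I)) ((A (j+2)).map (quotLieHom I))) := by
  have hk1 : ∀ x ∈ I, x ∈ A (j+1) := qker_le_A I hI hA (by omega)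
  have hk2 : ∀ x ∈ I, x ∈ A (j+2) := qker_le_A I hI hA (by omega)
  set X := U ⊔ A (j+1) with hX
  have hkX : ∀ x ∈ I, x ∈ X := fun x hx => le_sup_right (a := U) (hk1 x hx)
  have hmapX : X.map (quotLieHom I) = U.map (quotLieHom I) ⊔ (A (j+1)).map (quotLieHom I) :=
    qmap_sup I U (A (j+1))
  unfold IsUFrattiniFactor
  rw [← hmapX, ← hX]
  constructor
  · rintro (h | h)
    · left
      unfold phi
      rw [le_sInf_iff]
      rintro Nb ⟨hNb, hXNb⟩
      have hcoN : IsCoatom (Nb.comap (quotLieHom I)) := qcomap_coatom I hNb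
      have hXN : X ≤ Nb.comap (quotLieHom I) := by
        calc X ≤ (X.map (quotLieHom I)).comap (quotLieHom I) :=
          (LieSubalgebra.gc_map_comap (f := quotLieHom I)).le_u_l _
        _ ≤ _ := (LieSubalgebra.gc_map_comap (f := quotLieHom I)).monotone_u hXNb
      have h1 : A (j+2) ≤ Nb.comap (quotLieHom I) := by
        refine le_trans h ?_
        unfold phi
        exact sInf_le ⟨hcoN, hXN⟩
      calc (A (j+2)).map (quotLieHom I) ≤ ((Nb.comap (quotLieHom I)).map (quotLieHom I)) :=
        (LieSubalgebra.gc_map_comap (f := quotLieHom I)).monotone_l h1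
      _ = Nb := qmap_comap I Nb
    · right
      rw [h, qmap_top]
  · rintro (h | h)
    · left
      unfold phi
      rw [le_sInf_iff]
      rintro M ⟨hM, hXM⟩
      have hkM : ∀ x ∈ I, x ∈ M := fun x hx => hXM (hkX x hx)
      have hcoM : IsCoatom (M.map (quotLieHom I)) := qmap_coatom I hM hkM
      have hXmM : X.map (quotLieHom I) ≤ M.map (quotLieHom I) :=
        (LieSubalgebra.gc_map_comap (f := quotLieHom I)).monotone_l hXM
      have h1 : (A (j+2)).map (quotLieHom I) ≤ M.map (quotLieHom I) := by
        refine le_trans h ?_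
        unfold phi
        exact sInf_le ⟨hcoM, hXmM⟩
      have h2 : A (j+2) ≤ (M.map (quotLieHom I)).comap (quotLieHom I) := by
        calc A (j+2) ≤ ((A (j+2)).map (quotLieHom I)).comap (quotLieHom I) :=
          (LieSubalgebra.gc_map_comap (f := quotLieHom I)).le_u_l _
        _ ≤ _ := (LieSubalgebra.gc_map_comap (f := quotLieHom I)).monotone_u h1
      rwa [qcomap_map I M hkM] at h2
    · right
      have : X = (X.map (quotLieHom I)).comap (quotLieHom I) := (qcomap_map I X hkX).symm
      rw [this, h, qcomap_top]

end ChiefQuot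

end Paper

namespace Paper

variable {F : Type*} [Field F] {L : Type*} [LieRing L] [LieAlgebra F L]

theorem mem_biInf {ι : Type*} {p : ι → Prop} (f : ι → LieSubalgebra F L) (x : L) :
    (x ∈ ⨅ i ∈ {i | p i}, f i) ↔ ∀ i, p i → x ∈ f i := by
  constructor
  · intro h i hi
    exact (mem_iInf' _ x).1 ((mem_iInf' _ x).1 h i) hi
  · intro h
    exact (mem_iInf' _ x).2 fun i => (mem_iInf' _ x).2 fun hi => h i hi

end Paper
namespace Paper

universe v

variable {F : Type*} [Field F]

set_option maxHeartbeats 1000000 in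
theorem aux_main : ∀ (n : ℕ) (L : Type v) [LieRing L] [LieAlgebra F L]
    [LieAlgebra.IsSolvable L] [FiniteDimensional F L]
    (A : ℕ → LieSubalgebra F L), IsChiefSeries A n →
    ∀ U S : LieSubalgebra F L, U ≤ S → IsComplementedInterval S →
    ∃ W : LieSubalgebra F L, W ≤ S ∧ U ≤ W ∧ IsComplementedInterval W ∧
      IsPrefrattiniWrt U A n W := by
  intro n
  induction n with
  | zero =>
    intro L _ _ _ _ A hA U S hUS hSc
    have htop : ∀ X : LieSubalgebra F L, X = ⊤ := by
      intro X
      refine le_antisymm le_top ?_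
      rw [← hA.2.1, hA.1]
      exact bot_le
    refine ⟨⊤, (htop S).ge, le_top, ?_, ?_⟩
    · intro Z hZ
      refine ⟨⊤, le_rfl, ?_, ?_⟩
      · rw [htop Z, inf_top_eq]
      · rw [sup_top_eq]
    · refine ⟨fun _ => ⊤, fun i hi => absurd hi (by omega), ?_⟩
      refine le_antisymm ?_ le_top
      intro x _
      exact (mem_biInf (fun _ => (⊤ : LieSubalgebra F L)) x).2 fun i hi => LieSubalgebra.mem_top x
  | succ m ih =>
    intro L _ _ _ _ A hA U S hUS hSc
    obtain ⟨h0, hT, hId, hlt⟩ := hA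
    have hA' : IsChiefSeries A (m+1) := ⟨h0, hT, hId, hlt⟩
    have hId1 : IsIdealSubalg (A 1) := hId 1
    set I : LieIdeal F L := toIdeal (A 1) hId1 with hIdef
    have hI : ∀ x : L, x ∈ I ↔ x ∈ A 1 := fun x => Iff.rfl
    haveI : LieAlgebra.IsSolvable (L ⧸ I) :=
      Function.Surjective.lieAlgebra_isSolvable (f := quotLieHom I) (qsurj I)
    haveI : FiniteDimensional F (L ⧸ I) := by
      show FiniteDimensional F (L ⧸ I.toSubmodule)
      infer_instance
    set Abar : ℕ → LieSubalgebra F (L ⧸ I) := fun j => (A (j+1)).map (quotLieHom I) with hAbardef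
    have hAbar : IsChiefSeries Abar m := qchief I hI hA'
    set Ubar : LieSubalgebra F (L ⧸ I) := U.map (quotLieHom I) with hUbardef
    set Sbar : LieSubalgebra F (L ⧸ I) := (S ⊔ A 1).map (quotLieHom I) with hSbardef
    have gc := LieSubalgebra.gc_map_comap (f := quotLieHom I)
    have hUSbar : Ubar ≤ Sbar := gc.monotone_l (le_trans hUS le_sup_left)
    have hkSA : ∀ x ∈ I, x ∈ S ⊔ A 1 := fun x hx => le_sup_right (a := S) ((hI x).1 hx)
    -- the interval over Sbar is complemented
    have hScbar : IsComplementedInterval Sbar := by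
      intro Zb hZb
      set Z := Zb.comap (quotLieHom I) with hZdef
      have hZk : ∀ x ∈ I, x ∈ Z := fun x hx => qker_le_comap I Zb hx
      have hA1Z : A 1 ≤ Z := fun x hx => hZk x ((hI x).2 hx)
      have hSZ : S ≤ Z := by
        refine le_trans (le_trans le_sup_left (gc.le_u_l (S ⊔ A 1))) ?_
        exact gc.monotone_u hZb
      obtain ⟨Y, hSY, hmeet, hjoin⟩ := hSc Z hSZ
      have hkYA : ∀ x ∈ I, x ∈ Y ⊔ A 1 := fun x hx => le_sup_right (a := Y) ((hI x).1 hx)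
      refine ⟨(Y ⊔ A 1).map (quotLieHom I), gc.monotone_l (sup_le_sup_right hSY _), ?_, ?_⟩
      · -- meet
        have hcomap : (Zb ⊓ (Y ⊔ A 1).map (quotLieHom I)).comap (quotLieHom I)
            = Z ⊓ (Y ⊔ A 1) := by
          have : (Zb ⊓ (Y ⊔ A 1).map (quotLieHom I)).comap (quotLieHom I)
              = Zb.comap (quotLieHom I) ⊓ ((Y ⊔ A 1).map (quotLieHom I)).comap (quotLieHom I) := rfl
          rw [this, qcomap_map I _ hkYA]
        have hsub : Z ⊓ (Y ⊔ A 1) = S ⊔ A 1 := by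
          apply LieSubalgebra.toSubmodule_injective
          rw [LieSubalgebra.inf_toSubmodule, supIdeal hId1, supIdeal hId1]
          have hA1Z' : (A 1 : Submodule F L) ≤ (Z : Submodule F L) := hA1Z
          have hmeet' : (Z : Submodule F L) ⊓ (Y : Submodule F L) = (S : Submodule F L) := by
            rw [← LieSubalgebra.inf_toSubmodule, hmeet]
          calc (Z : Submodule F L) ⊓ ((Y : Submodule F L) ⊔ (A 1 : Submodule F L))
              = ((A 1 : Submodule F L) ⊔ (Y : Submodule F L)) ⊓ (Z : Submodule F L) := by
                rw [inf_comm, sup_comm]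
            _ = (A 1 : Submodule F L) ⊔ ((Y : Submodule F L) ⊓ (Z : Submodule F L)) :=
                sup_inf_assoc_of_le _ hA1Z'
            _ = (S : Submodule F L) ⊔ (A 1 : Submodule F L) := by
                rw [inf_comm, hmeet', sup_comm]
        rw [← qmap_comap I (Zb ⊓ (Y ⊔ A 1).map (quotLieHom I)), hcomap, hsub]
      · -- join
        have h1 : (Z ⊔ Y).map (quotLieHom I) = ⊤ := by rw [hjoin, qmap_top]
        have h2 : Z.map (quotLieHom I) = Zb := qmap_comap I Zb
        rw [qmap_sup] at h1
        refine top_le_iff.1 ?_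
        rw [← h1, h2]
        exact sup_le_sup_left (gc.monotone_l le_sup_left) _
    -- apply the induction hypothesis in the quotient
    obtain ⟨Wb, hWbS, hUWb, hWbc, Mb, hMb1, hMb2⟩ :=
      ih (L ⧸ I) Abar hAbar Ubar Sbar hUSbar hScbar
    set W0 : LieSubalgebra F L := Wb.comap (quotLieHom I) with hW0def
    have hA1W0 : A 1 ≤ W0 := fun x hx => qker_le_comap I Wb ((hI x).2 hx)
    have hUW0 : U ≤ W0 := le_trans (gc.le_u_l U) (gc.monotone_u hUWb)
    have hW0S : W0 ≤ S ⊔ A 1 := by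
      have h := gc.monotone_u hWbS
      rw [qcomap_map I _ hkSA] at h
      exact h
    have hW0c : ∀ Z : LieSubalgebra F L, W0 ≤ Z →
        ∃ Y, W0 ≤ Y ∧ A 1 ≤ Y ∧ Z ⊓ Y = W0 ∧ Z ⊔ Y = ⊤ := by
      intro Z hWZ
      have hZk : ∀ x ∈ I, x ∈ Z := fun x hx => hWZ (qker_le_comap I Wb hx)
      have hWbZ : Wb ≤ Z.map (quotLieHom I) := by
        rw [← qmap_comap I Wb]
        exact gc.monotone_l hWZ
      obtain ⟨Yb, hWbY, hmeet, hjoin⟩ := hWbc (Z.map (quotLieHom I)) hWbZ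
      refine ⟨Yb.comap (quotLieHom I), gc.monotone_u hWbY, fun x hx => qker_le_comap I Yb ((hI x).2 hx), ?_, ?_⟩
      · have h1 : Z ⊓ Yb.comap (quotLieHom I) = (Z.map (quotLieHom I) ⊓ Yb).comap (quotLieHom I) := by
          have h2 : (Z.map (quotLieHom I) ⊓ Yb).comap (quotLieHom I)
              = (Z.map (quotLieHom I)).comap (quotLieHom I) ⊓ Yb.comap (quotLieHom I) := rfl
          rw [h2, qcomap_map I Z hZk]
        rw [h1, hmeet]
      · have hk2 : ∀ x ∈ I, x ∈ Z ⊔ Yb.comap (quotLieHom I) := fun x hx => le_sup_left (b := Yb.comap (quotLieHom I)) (hZk x hx)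
        have : (Z ⊔ Yb.comap (quotLieHom I)).map (quotLieHom I) = ⊤ := by
          rw [qmap_sup, qmap_comap I Yb, ← hjoin]
        rw [← qcomap_map I _ hk2, this, qcomap_top]
    -- common facts about the bottom factor
    have hU0 : U ⊔ A 0 = U := by rw [h0, sup_bot_eq]
    have hchief0 : ∀ B : LieSubalgebra F L, IsIdealSubalg B → B ≤ A 1 → B = ⊥ ∨ B = A 1 := by
      intro B hB hBA
      rcases (hlt 0 (by omega)).2 B hB (by rw [h0]; exact bot_le) hBA with h | h
      · left; rw [h, h0]
      · right; exact h
    have habel := abelian_min hId1 hchief0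
    have hMsucc : ∀ j : ℕ, j < m → ¬ IsUFrattiniFactor U (A (j+1)) (A (j+2)) →
        IsCoatom ((Mb j).comap (quotLieHom I)) ∧ U ⊔ A (j+1) ≤ (Mb j).comap (quotLieHom I) ∧
          ¬ A (j+2) ≤ (Mb j).comap (quotLieHom I) := by
      intro j hj hnf
      have hnfbar : ¬ IsUFrattiniFactor Ubar (Abar j) (Abar (j+1)) :=
        fun hc => hnf ((qfrat I hI hA' U hj).2 hc)
      obtain ⟨hco, hle, hnle⟩ := hMb1 j hj hnfbar
      refine ⟨qcomap_coatom I hco, ?_, ?_⟩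
      · refine sup_le ?_ ?_
        · exact le_trans (gc.le_u_l U) (gc.monotone_u (le_trans le_sup_left hle))
        · exact le_trans (gc.le_u_l (A (j+1))) (gc.monotone_u (le_trans le_sup_right hle))
      · intro hc
        exact hnle (le_trans (gc.monotone_l hc) (le_of_eq (qmap_comap I (Mb j))))
    have hW0mem : ∀ x : L, x ∈ W0 ↔
        ∀ j, j < m → ¬ IsUFrattiniFactor Ubar (Abar j) (Abar (j+1)) → quotLieHom I x ∈ Mb j := by
      intro x
      constructor
      · intro hx j hj hnf
        have hxw : quotLieHom I x ∈ Wb := hx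
        rw [hMb2] at hxw
        exact (mem_biInf Mb (quotLieHom I x)).1 hxw j ⟨hj, hnf⟩
      · intro hx
        show quotLieHom I x ∈ Wb
        rw [hMb2]
        exact (mem_biInf Mb (quotLieHom I x)).2 fun j hj => hx j hj.1 hj.2
    by_cases hFr0 : IsUFrattiniFactor U (A 0) (A 1)
    · -- bottom factor is U-Frattini : A 1 ≤ S and W := W0
      have hA1S : A 1 ≤ S := by
        rcases hFr0 with h | h
        · refine le_of_all_coatoms hSc ?_
          intro M hM hSM
          refine le_trans h ?_
          unfold phi
          exact sInf_le ⟨hM, by rw [hU0]; exact le_trans hUS hSM⟩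
        · rw [hU0] at h
          have hS : S = ⊤ := top_le_iff.1 (h ▸ hUS)
          rw [hS]; exact le_top
      have hSA : S ⊔ A 1 = S := sup_eq_left.2 hA1S
      refine ⟨W0, by rw [← hSA]; exact hW0S, hUW0, ?_, ?_⟩
      · intro Z hWZ
        obtain ⟨Y, h1, _, h3, h4⟩ := hW0c Z hWZ
        exact ⟨Y, h1, h3, h4⟩
      · refine ⟨fun i => match i with | 0 => ⊤ | (j+1) => (Mb j).comap (quotLieHom I), ?_, ?_⟩
        · intro i hi hnf
          match i with
          | 0 => exact absurd hFr0 hnf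
          | (j+1) => exact hMsucc j (by omega) hnf
        · refine le_antisymm ?_ ?_
          · intro x hx
            refine (mem_biInf _ x).2 ?_
            rintro i ⟨hi, hnf⟩
            match i with
            | 0 => exact LieSubalgebra.mem_top x
            | (j+1) =>
              show x ∈ (Mb j).comap (quotLieHom I)
              exact (hW0mem x).1 hx j (by omega)
                (fun hc => hnf ((qfrat I hI hA' U (by omega)).2 hc))
          · intro x hx
            refine (hW0mem x).2 ?_
            intro j hj hnfbar
            have hnf : ¬ IsUFrattiniFactor U (A (j+1)) (A (j+2)) :=
              fun hc => hnfbar ((qfrat I hI hA' U hj).1 hc)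
            exact (mem_biInf _ x).1 hx (j+1) ⟨by omega, hnf⟩
    · -- bottom factor is not U-Frattini
      have hnFr : ¬ (A 1 ≤ phi (U ⊔ A 0)) ∧ U ⊔ A 0 ≠ ⊤ := by
        constructor
        · intro hc; exact hFr0 (Or.inl hc)
        · intro hc; exact hFr0 (Or.inr hc)
      -- produce a coatom Mstar
      have hMstar : ∃ Mstar : LieSubalgebra F L, IsCoatom Mstar ∧ U ≤ Mstar ∧
          ¬ A 1 ≤ Mstar ∧ (A 1 ≤ S ∨ S ≤ Mstar) := by
        by_cases hA1S : A 1 ≤ S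
        · have h1 : ¬ A 1 ≤ phi (U ⊔ A 0) := hnFr.1
          unfold phi at h1
          rw [le_sInf_iff] at h1
          push_neg at h1
          obtain ⟨M, ⟨hM, hUM⟩, hnAM⟩ := h1
          exact ⟨M, hM, by rw [hU0] at hUM; exact hUM, hnAM, Or.inl hA1S⟩
        · have h1 : ¬ ∀ M : LieSubalgebra F L, IsCoatom M → S ≤ M → A 1 ≤ M :=
            fun hc => hA1S (le_of_all_coatoms hSc hc)
          push_neg at h1
          obtain ⟨M, hM, hSM, hnAM⟩ := h1
          exact ⟨M, hM, le_trans hUS hSM, hnAM, Or.inr hSM⟩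
      obtain ⟨Mstar, hcoat, hUM, hnAM, hScase⟩ := hMstar
      have hMtop : Mstar ⊔ A 1 = ⊤ := by
        refine hcoat.2 _ (lt_of_le_of_ne le_sup_left ?_)
        intro hc
        exact hnAM (hc ▸ le_sup_right)
      have hMA : Mstar ⊓ A 1 = ⊥ := (min_meet hId1 habel hchief0 hMtop).resolve_right hnAM
      have hMA' : (Mstar : Submodule F L) ⊓ (A 1 : Submodule F L) = ⊥ := by
        rw [← LieSubalgebra.inf_toSubmodule, hMA, LieSubalgebra.bot_toSubmodule]
      set W : LieSubalgebra F L := W0 ⊓ Mstar with hWdef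
      have hWM : W ≤ Mstar := inf_le_right
      have hWW0 : W ≤ W0 := inf_le_left
      have hWS : W ≤ S := by
        rcases hScase with h | h
        · have : S ⊔ A 1 = S := sup_eq_left.2 h
          exact le_trans hWW0 (by rw [← this]; exact hW0S)
        · -- S ≤ Mstar; use modularity
          have hsub : (W : Submodule F L) ≤ (S : Submodule F L) := by
            have h1 : (W : Submodule F L) ≤ ((S ⊔ A 1 : LieSubalgebra F L) : Submodule F L) ⊓ (Mstar : Submodule F L) := by
              refine le_inf ?_ ?_
              · exact le_trans (inf_le_left : (W : Submodule F L) ≤ _) (hW0S : (W0 : Submodule F L) ≤ _)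
              · exact inf_le_right
            refine le_trans h1 ?_
            rw [supIdeal hId1]
            have h2 : (S : Submodule F L) ≤ (Mstar : Submodule F L) := h
            rw [sup_inf_assoc_of_le _ h2]
            rw [inf_comm, hMA', sup_bot_eq]
          exact hsub
      have hUW : U ≤ W := le_inf hUW0 hUM
      -- W0 = W ⊔ A 1 at the submodule level
      have hW0sub : (W0 : Submodule F L) = (W : Submodule F L) ⊔ (A 1 : Submodule F L) := by
        have h1 : (W0 : Submodule F L) = ((A 1 : LieSubalgebra F L) : Submodule F L) ⊔ ((Mstar ⊓ W0 : LieSubalgebra F L) : Submodule F L) := by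
          have htop' : (W0 : Submodule F L) ⊓ (((Mstar ⊔ A 1 : LieSubalgebra F L)) : Submodule F L) = (W0 : Submodule F L) := by
            rw [hMtop, LieSubalgebra.top_toSubmodule, inf_top_eq]
          have hA1W0' : (A 1 : Submodule F L) ≤ (W0 : Submodule F L) := hA1W0
          calc (W0 : Submodule F L)
              = (W0 : Submodule F L) ⊓ (((Mstar ⊔ A 1 : LieSubalgebra F L)) : Submodule F L) := htop'.symm
            _ = ((A 1 : Submodule F L) ⊔ (Mstar : Submodule F L)) ⊓ (W0 : Submodule F L) := by
                rw [supIdeal hId1, inf_comm, sup_comm]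
            _ = (A 1 : Submodule F L) ⊔ ((Mstar : Submodule F L) ⊓ (W0 : Submodule F L)) :=
                sup_inf_assoc_of_le _ hA1W0'
            _ = _ := by rw [← LieSubalgebra.inf_toSubmodule]
        rw [h1, inf_comm (a := Mstar) (b := W0)]
        exact sup_comm _ _
      refine ⟨W, hWS, hUW, ?_, ?_⟩
      · -- complemented interval over W
        intro Z hWZ
        have hZ1 : W0 ≤ Z ⊔ A 1 := by
          intro x hx
          have hx' : x ∈ (W : Submodule F L) ⊔ (A 1 : Submodule F L) := by
            rw [← hW0sub]; exact hx
          rw [← supIdeal hId1] at hx'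
          exact (sup_le_sup_right hWZ (A 1))
            (by exact hx' : x ∈ (W ⊔ A 1 : LieSubalgebra F L))
        obtain ⟨Y, hW0Y, hA1Y, hmeet, hjoin⟩ := hW0c (Z ⊔ A 1) hZ1
        have hWY : W ≤ Y := le_trans hWW0 hW0Y
        have hZYtop : Z ⊔ Y = ⊤ := by
          have : Z ⊔ A 1 ⊔ Y = Z ⊔ Y := by
            rw [sup_assoc]
            congr 1
            exact sup_eq_right.2 hA1Y
          rw [← this, hjoin]
        -- submodule computation : Z ⊓ Y = W ⊔ (Z ⊓ A 1)
        have hZY : (Z : Submodule F L) ⊓ (Y : Submodule F L)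
            = (W : Submodule F L) ⊔ ((Z : Submodule F L) ⊓ (A 1 : Submodule F L)) := by
          have h1 : (Z : Submodule F L) ⊓ (Y : Submodule F L) ≤ (W0 : Submodule F L) := by
            have : (Z ⊓ Y : LieSubalgebra F L) ≤ (Z ⊔ A 1) ⊓ Y :=
              inf_le_inf_right _ le_sup_left
            rw [hmeet] at this
            exact this
          have hWZY : (W : Submodule F L) ≤ (Z : Submodule F L) ⊓ (Y : Submodule F L) :=
            le_inf (hWZ : (W : Submodule F L) ≤ Z) (hWY : (W : Submodule F L) ≤ Y)
          have h2 : (Z : Submodule F L) ⊓ (Y : Submodule F L)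
              = ((W : Submodule F L) ⊔ (A 1 : Submodule F L)) ⊓ ((Z : Submodule F L) ⊓ (Y : Submodule F L)) := by
            rw [← hW0sub]
            exact (inf_eq_right.2 h1).symm
          rw [h2, sup_inf_assoc_of_le _ hWZY]
          congr 1
          -- A1 ⊓ (Z ⊓ Y) = Z ⊓ A1  since A1 ≤ Y
          have hA1Y' : (A 1 : Submodule F L) ≤ (Y : Submodule F L) := hA1Y
          refine le_antisymm ?_ ?_
          · exact le_inf (le_trans inf_le_right inf_le_left) inf_le_left
          · exact le_inf inf_le_right (le_inf inf_le_left (le_trans inf_le_right hA1Y'))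
        -- Y decomposes as (Y ⊓ Mstar) ⊔ A 1
        have hYsub : Y ≤ (Y ⊓ Mstar) ⊔ A 1 := by
          intro x hx
          have hx2 : x ∈ (Y : Submodule F L) ⊓ ((Mstar : Submodule F L) ⊔ (A 1 : Submodule F L)) := by
            refine ⟨hx, ?_⟩
            have hx3 : x ∈ ((Mstar ⊔ A 1 : LieSubalgebra F L) : Submodule F L) := by
              rw [hMtop]
              exact Submodule.mem_top (R := F) (M := L)
            rwa [supIdeal hId1] at hx3
          have hA1Y' : (A 1 : Submodule F L) ≤ (Y : Submodule F L) := hA1Y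
          have hmod : (Y : Submodule F L) ⊓ ((Mstar : Submodule F L) ⊔ (A 1 : Submodule F L))
              = ((Y : Submodule F L) ⊓ (Mstar : Submodule F L)) ⊔ (A 1 : Submodule F L) := by
            calc (Y : Submodule F L) ⊓ ((Mstar : Submodule F L) ⊔ (A 1 : Submodule F L))
                = ((A 1 : Submodule F L) ⊔ (Mstar : Submodule F L)) ⊓ (Y : Submodule F L) := by
                  rw [inf_comm, sup_comm]
              _ = (A 1 : Submodule F L) ⊔ ((Mstar : Submodule F L) ⊓ (Y : Submodule F L)) :=
                  sup_inf_assoc_of_le _ hA1Y'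
              _ = ((Y : Submodule F L) ⊓ (Mstar : Submodule F L)) ⊔ (A 1 : Submodule F L) := by
                  rw [inf_comm, sup_comm]
          rw [hmod] at hx2
          have hfin : x ∈ (((Y ⊓ Mstar) ⊔ A 1 : LieSubalgebra F L) : Submodule F L) := by
            rw [supIdeal hId1, LieSubalgebra.inf_toSubmodule]
            exact hx2
          exact hfin
        set V : LieSubalgebra F L := Z ⊔ (Y ⊓ Mstar) with hVdef
        have hVA : V ⊔ A 1 = ⊤ := by
          have h1 : Z ⊔ Y ≤ V ⊔ A 1 := by
            refine sup_le (le_trans le_sup_left le_sup_left) ?_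
            refine le_trans hYsub ?_
            exact sup_le_sup_right le_sup_right (A 1)
          rw [hZYtop] at h1
          exact top_unique h1
        rcases min_meet hId1 habel hchief0 hVA with hV | hV
        · -- V ⊓ A 1 = ⊥ : take Y as complement
          have hZA : (Z : Submodule F L) ⊓ (A 1 : Submodule F L) = ⊥ := by
            have h1 : Z ⊓ A 1 ≤ V ⊓ A 1 := inf_le_inf_right _ le_sup_left
            rw [hV] at h1
            have h2 : (Z ⊓ A 1 : LieSubalgebra F L) = ⊥ := le_bot_iff.1 h1
            rw [← LieSubalgebra.inf_toSubmodule, h2, LieSubalgebra.bot_toSubmodule]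
          have hZYW : Z ⊓ Y = W := by
            apply LieSubalgebra.toSubmodule_injective
            rw [LieSubalgebra.inf_toSubmodule, hZY, hZA, sup_bot_eq]
          exact ⟨Y, hWY, hZYW, hZYtop⟩
        · -- A 1 ≤ V : take Y ⊓ Mstar as complement
          have hVtop : V = ⊤ := by
            rw [← hVA]
            exact (sup_eq_left.2 hV).symm
          have hmeet2 : Z ⊓ (Y ⊓ Mstar) = W := by
            apply LieSubalgebra.toSubmodule_injective
            rw [LieSubalgebra.inf_toSubmodule, LieSubalgebra.inf_toSubmodule]
            have hWM' : (W : Submodule F L) ≤ (Mstar : Submodule F L) := hWM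
            calc (Z : Submodule F L) ⊓ ((Y : Submodule F L) ⊓ (Mstar : Submodule F L))
                = ((Z : Submodule F L) ⊓ (Y : Submodule F L)) ⊓ (Mstar : Submodule F L) := by
                  rw [inf_assoc]
              _ = ((W : Submodule F L) ⊔ ((Z : Submodule F L) ⊓ (A 1 : Submodule F L)))
                    ⊓ (Mstar : Submodule F L) := by rw [hZY]
              _ = (W : Submodule F L) ⊔ (((Z : Submodule F L) ⊓ (A 1 : Submodule F L))
                    ⊓ (Mstar : Submodule F L)) := sup_inf_assoc_of_le _ hWM'
              _ = (W : Submodule F L) := by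
                  have hb : ((Z : Submodule F L) ⊓ (A 1 : Submodule F L))
                      ⊓ (Mstar : Submodule F L) ≤ ⊥ := by
                    rw [← hMA']
                    exact le_inf inf_le_right (le_trans inf_le_left inf_le_right)
                  rw [le_bot_iff.1 hb, sup_bot_eq]
          refine ⟨Y ⊓ Mstar, le_inf hWY hWM, hmeet2, hVtop⟩
      · -- prefrattini witness
        refine ⟨fun i => match i with | 0 => Mstar | (j+1) => (Mb j).comap (quotLieHom I), ?_, ?_⟩
        · intro i hi hnf
          match i with
          | 0 => exact ⟨hcoat, by rw [hU0]; exact hUM, hnAM⟩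
          | (j+1) => exact hMsucc j (by omega) hnf
        · refine le_antisymm ?_ ?_
          · intro x hx
            have hx1 : x ∈ W0 := hWW0 hx
            have hx2 : x ∈ Mstar := hWM hx
            refine (mem_biInf _ x).2 ?_
            rintro i ⟨hi, hnf⟩
            match i with
            | 0 => exact hx2
            | (j+1) =>
              show x ∈ (Mb j).comap (quotLieHom I)
              exact (hW0mem x).1 hx1 j (by omega)
                (fun hc => hnf ((qfrat I hI hA' U (by omega)).2 hc))
          · intro x hx
            have hxM : x ∈ Mstar := (mem_biInf _ x).1 hx 0 ⟨by omega, hFr0⟩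
            have hxW0 : x ∈ W0 := by
              refine (hW0mem x).2 ?_
              intro j hj hnfbar
              have hnf : ¬ IsUFrattiniFactor U (A (j+1)) (A (j+2)) :=
                fun hc => hnfbar ((qfrat I hI hA' U hj).1 hc)
              exact (mem_biInf _ x).1 hx (j+1) ⟨by omega, hnf⟩
            show x ∈ W0 ⊓ Mstar
            exact ⟨hxW0, hxM⟩


end Paper

theorem stmt13 {F : Type*} [Field F] {L : Type*} [LieRing L] [LieAlgebra F L]
    [LieAlgebra.IsSolvable L] [FiniteDimensional F L]
    (U : LieSubalgebra F L) (n : ℕ) (A : ℕ → LieSubalgebra F L)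
    (hA : Paper.IsChiefSeries A n) (S : LieSubalgebra F L)
    (hS : S ∈ Paper.OmegaMin U) :
    Paper.IsPrefrattiniWrt U A n S := by
  obtain ⟨⟨hUS, hSc⟩, hmin⟩ := hS
  obtain ⟨W, hWS, hUW, hWc, hWpre⟩ := Paper.aux_main n L A hA U S hUS hSc
  have hW : W = S := hmin W ⟨hUW, hWc⟩ hWS
  rwa [hW] at hWpre
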